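/- Let E = S^{n-1} = { ξ ∈ ℝ^n : |ξ| = 1 } be the euclidean unit sphere of ℝ^n, regarded as a subset of ℂ^n. Then Siciak's homogeneous extremal function of E equals the cross norm associated to the euclidean norm: Ψ_E(ζ) = |ζ|_c for every ζ ∈ ℂ^n. -/

import Mathlib

open scoped ENNReal RealInnerProductSpace BigOperators
open Filter MeasureTheory

noncomputable section

/-- ℂⁿ with the hermitian (euclidean) norm. -/
abbrev Cn (n : ℕ) := EuclideanSpace ℂ (Fin n)
/-- ℝⁿ with the euclidean norm. -/
abbrev Rn (n : ℕ) := EuclideanSpace ℝ (Fin n)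

/-- The inclusion ℝⁿ ⊆ ℂⁿ. -/
def toCn {n : ℕ} (x : Rn n) : Cn n := WithLp.toLp 2 (fun i => (x i : ℂ))

/-- Evaluation of a polynomial on ℂⁿ at a point of ℂⁿ. -/
def evalP {n : ℕ} (p : MvPolynomial (Fin n) ℂ) (ζ : Cn n) : ℂ :=
  MvPolynomial.eval (fun i => ζ i) p

/-- Siciak's homogeneous extremal function with weight `γ`:
`Ψ_{E,γ}(ζ) = sup{ |p(ζ)|^{1/k} : p homogeneous of degree k ≥ 1, |p|^{1/k} ≤ γ on E }`. -/
def siciak {n : ℕ} (E : Set (Cn n)) (γ : Cn n → ℝ) (ζ : Cn n) : ℝ≥0∞ :=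
  ⨆ (p : MvPolynomial (Fin n) ℂ) (k : ℕ) (_ : p.IsHomogeneous k) (_ : 1 ≤ k)
    (_ : ∀ ξ ∈ E, ‖evalP p ξ‖ ^ (1 / (k : ℝ)) ≤ γ ξ),
    ENNReal.ofReal (‖evalP p ζ‖ ^ (1 / (k : ℝ)))

/-- The upper semicontinuous regularization `Ψ^*(ζ) = limsup_{ϑ → ζ} Ψ(ϑ)`. -/
def siciakStar {n : ℕ} (E : Set (Cn n)) (γ : Cn n → ℝ) (ζ : Cn n) : ℝ≥0∞ :=
  Filter.limsup (siciak E γ) (nhds ζ)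

/-- `E` has positive homogeneous capacity in the sense of Siciak:
`Ψ_E^*` is bounded above on the unit sphere of ℂⁿ. -/
def PosHomCapacity {n : ℕ} (E : Set (Cn n)) : Prop :=
  ∃ M : ℝ, ∀ ζ : Cn n, ‖ζ‖ = 1 → siciakStar E (fun _ => 1) ζ ≤ ENNReal.ofReal M

end

noncomputable section

/-- The cross norm on ℂⁿ associated to a norm `ν` on ℝⁿ. -/
def crossNorm {n : ℕ} (ν : Rn n → ℝ) (ζ : Cn n) : ℝ :=
  sInf { s : ℝ | ∃ (N : ℕ) (α : Fin N → ℂ) (ω : Fin N → Rn n),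
    ζ = ∑ j, α j • toCn (ω j) ∧ s = ∑ j, ‖α j‖ * ν (ω j) }

lemma eval_smul_hom {n k : ℕ} {p : MvPolynomial (Fin n) ℂ} (hp : p.IsHomogeneous k)
    (c : ℂ) (x : Fin n → ℂ) :
    MvPolynomial.eval (fun i => c * x i) p = c ^ k * MvPolynomial.eval x p := by
  rw [MvPolynomial.eval_eq, MvPolynomial.eval_eq, Finset.mul_sum]
  refine Finset.sum_congr rfl fun d hd => ?_
  have hdeg : d.degree = k := by
    by_contra h
    exact MvPolynomial.mem_support_iff.mp hd (hp.coeff_eq_zero h)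
  have h2 : ∏ i ∈ d.support, (c * x i) ^ d i
      = c ^ k * ∏ i ∈ d.support, x i ^ d i := by
    rw [← hdeg]
    simp_rw [mul_pow]
    rw [Finset.prod_mul_distrib, Finset.prod_pow_eq_pow_sum]
    rfl
  rw [h2]; ring


lemma diff_eval {n : ℕ} {f : Fin n → ℂ → ℂ} (hf : ∀ i, Differentiable ℂ (f i))
    (p : MvPolynomial (Fin n) ℂ) :
    Differentiable ℂ (fun z => MvPolynomial.eval (fun i => f i z) p) := by
  induction p using MvPolynomial.induction_on with
  | C a => simpa using differentiable_const a
  | add p q hp hq => simp only [map_add]; exact hp.add hq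
  | mul_X p i hp => simp only [map_mul, MvPolynomial.eval_X]; exact hp.mul (hf i)


lemma bessel2 {n : ℕ} (u v ω : Rn n) (hu : ‖u‖ ≤ 1) (hv : ‖v‖ ≤ 1) (huv : ⟪u, v⟫ = 0) :
    ⟪u, ω⟫ ^ 2 + ⟪v, ω⟫ ^ 2 ≤ ‖ω‖ ^ 2 := by
  set p := ⟪u, ω⟫ with hp
  set q := ⟪v, ω⟫ with hq
  have h0 : (0:ℝ) ≤ ⟪ω - p • u - q • v, ω - p • u - q • v⟫ := real_inner_self_nonneg
  simp only [inner_sub_left, inner_sub_right, real_inner_smul_left, real_inner_smul_right] at h0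
  have hωu : ⟪ω, u⟫ = p := real_inner_comm u ω
  have hωv : ⟪ω, v⟫ = q := real_inner_comm v ω
  have hvu : ⟪v, u⟫ = 0 := by rw [real_inner_comm]; exact huv
  have huu : ⟪u, u⟫ = ‖u‖ ^ 2 := real_inner_self_eq_norm_sq u
  have hvv : ⟪v, v⟫ = ‖v‖ ^ 2 := real_inner_self_eq_norm_sq v
  have hωω : ⟪ω, ω⟫ = ‖ω‖ ^ 2 := real_inner_self_eq_norm_sq ω
  rw [hωu, hωv, hvu, huu, hvv, hωω, huv, ← hp, ← hq] at h0
  have hu2 : ‖u‖ ^ 2 ≤ 1 := by nlinarith [norm_nonneg u]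
  have hv2 : ‖v‖ ^ 2 ≤ 1 := by nlinarith [norm_nonneg v]
  nlinarith [sq_nonneg p, sq_nonneg q]


lemma inner_sum' {n : ℕ} (x y : Rn n) : ⟪x, y⟫ = ∑ i, x i * y i := by
  rw [PiLp.inner_apply]; simp [mul_comm]


lemma normsq_sum' {n : ℕ} (x : Rn n) : ‖x‖ ^ 2 = ∑ i, x i ^ 2 := by
  rw [← real_inner_self_eq_norm_sq, inner_sum']
  exact Finset.sum_congr rfl fun i _ => (sq (x i)).symm


lemma exists_normal {n : ℕ} (ζ : Cn n) :
    ∃ (d : ℂ) (ξ η : Rn n), ‖d‖ = 1 ∧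
      (∀ i, ζ i = d * ((ξ i : ℂ) + (η i : ℂ) * Complex.I)) ∧
      ⟪ξ, η⟫ = 0 ∧ ‖η‖ ≤ ‖ξ‖ := by
  classical
  set q : ℂ := ∑ i, (ζ i) ^ 2 with hq
  set d : ℂ := Complex.exp ((q.arg / 2 : ℝ) * Complex.I) with hd
  have hdabs : ‖d‖ = 1 := by
    rw [hd, Complex.norm_exp]
    simp
  have hd2 : d ^ 2 = Complex.exp ((q.arg : ℝ) * Complex.I) := by
    rw [hd, ← Complex.exp_nat_mul]
    norm_num
    ring_nf
  have hqd : q = (‖q‖ : ℂ) * d ^ 2 := by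
    rw [hd2, Complex.norm_mul_exp_arg_mul_I q]
  have hde : d * (starRingEnd ℂ) d = 1 := by
    rw [Complex.mul_conj, Complex.normSq_eq_norm_sq, hdabs]
    norm_num
  set ξ : Rn n := WithLp.toLp 2 (fun i => ((starRingEnd ℂ) d * ζ i).re : Fin n → ℝ) with hξ
  set η : Rn n := WithLp.toLp 2 (fun i => ((starRingEnd ℂ) d * ζ i).im : Fin n → ℝ) with hη
  have hcoord : ∀ i, ζ i = d * ((ξ i : ℂ) + (η i : ℂ) * Complex.I) := by
    intro i
    have : ((ξ i : ℂ) + (η i : ℂ) * Complex.I) = (starRingEnd ℂ) d * ζ i :=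
      Complex.re_add_im _
    rw [this, ← mul_assoc, hde, one_mul]
  set A : ℝ := ∑ i, (ξ i ^ 2 - η i ^ 2) with hA
  set B : ℝ := ∑ i, 2 * ξ i * η i with hB
  have hsum : (A : ℂ) + (B : ℂ) * Complex.I = (‖q‖ : ℂ) := by
    rw [hA, hB]
    have e1 : ∀ i : Fin n, ((starRingEnd ℂ) d * ζ i) ^ 2
        = ((ξ i ^ 2 - η i ^ 2 : ℝ) : ℂ) + ((2 * ξ i * η i : ℝ) : ℂ) * Complex.I := by
      intro i
      have h := (Complex.re_add_im ((starRingEnd ℂ) d * ζ i)).symm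
      rw [h]
      push_cast
      ring_nf
      rw [Complex.I_sq]
      ring
    have e2 : ∑ i, ((starRingEnd ℂ) d * ζ i) ^ 2 = ((starRingEnd ℂ) d) ^ 2 * q := by
      rw [hq, Finset.mul_sum]
      exact Finset.sum_congr rfl fun i _ => by ring
    have e3 : ((starRingEnd ℂ) d) ^ 2 * q = (‖q‖ : ℂ) := by
      conv_lhs => rw [hqd]
      rw [show ((starRingEnd ℂ) d) ^ 2 * ((‖q‖ : ℂ) * d ^ 2)
          = (‖q‖ : ℂ) * (d * (starRingEnd ℂ) d) ^ 2 from by ring, hde, one_pow, mul_one]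
    calc ((∑ i, (ξ i ^ 2 - η i ^ 2) : ℝ) : ℂ) + ((∑ i, 2 * ξ i * η i : ℝ) : ℂ) * Complex.I
        = ∑ i, (((ξ i ^ 2 - η i ^ 2 : ℝ) : ℂ) + ((2 * ξ i * η i : ℝ) : ℂ) * Complex.I) := by
          push_cast
          rw [Finset.sum_add_distrib, Finset.sum_mul]
      _ = ∑ i, ((starRingEnd ℂ) d * ζ i) ^ 2 := Finset.sum_congr rfl fun i _ => (e1 i).symm
      _ = (‖q‖ : ℂ) := by rw [e2]; exact e3
  have hre : A = ‖q‖ := by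
    have := congrArg Complex.re hsum
    simpa using this
  have him : B = 0 := by
    have := congrArg Complex.im hsum
    simpa using this
  rw [hA] at hre
  rw [hB] at him
  refine ⟨d, ξ, η, hdabs, hcoord, ?_, ?_⟩
  · rw [inner_sum']
    have : ∑ i, 2 * ξ i * η i = 2 * ∑ i, ξ i * η i := by
      rw [Finset.mul_sum]; exact Finset.sum_congr rfl fun i _ => by ring
    rw [this] at him
    linarith
  · have h1 : ‖ξ‖ ^ 2 - ‖η‖ ^ 2 = ‖q‖ := by
      rw [normsq_sum', normsq_sum', ← Finset.sum_sub_distrib]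
      exact hre
    have h2 : (0:ℝ) ≤ ‖q‖ := norm_nonneg q
    nlinarith [norm_nonneg ξ, norm_nonneg η]


lemma key_bound {n k : ℕ} {p : MvPolynomial (Fin n) ℂ} (hp : p.IsHomogeneous k)
    (hb : ∀ ω : Rn n, ‖ω‖ = 1 → ‖evalP p (toCn ω)‖ ≤ 1)
    (u v : Rn n) (hu : ‖u‖ = 1) (hv : ‖v‖ = 1) (huv : ⟪u, v⟫ = 0)
    {a b : ℝ} (hb0 : 0 < b) (hba : b ≤ a) (ζ : Cn n)
    (hζ : ∀ i, ζ i = (a : ℂ) * (u i : ℂ) + (b : ℂ) * Complex.I * (v i : ℂ)) :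
    ‖evalP p ζ‖ ≤ (a + b) ^ k := by
  have ha0 : 0 < a := lt_of_lt_of_le hb0 hba
  have hab0 : 0 < a + b := by linarith
  set G : ℂ → ℂ := fun z => MvPolynomial.eval
      (fun i => ((z ^ 2 + 1) / 2) * (u i : ℂ) - Complex.I * ((z ^ 2 - 1) / 2) * (v i : ℂ)) p
    with hG
  have hdiff : Differentiable ℂ G := by
    apply diff_eval
    intro i
    fun_prop
  have hcirc : ∀ z : ℂ, ‖z‖ = 1 → ‖G z‖ ≤ 1 := by
    intro z hz
    set ω : Rn n := z.re • u + z.im • v with hω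
    have hzc : z * (starRingEnd ℂ) z = 1 := by
      rw [Complex.mul_conj, Complex.normSq_eq_norm_sq, hz]
      norm_num
    have hall : (fun i => ((z ^ 2 + 1) / 2) * (u i : ℂ) - Complex.I * ((z ^ 2 - 1) / 2) * (v i : ℂ))
        = fun i => z * ((toCn ω) i) := by
      funext i
      have hcoord : (toCn ω) i = ((z.re * u i + z.im * v i : ℝ) : ℂ) := by
        simp [hω, toCn, PiLp.add_apply, PiLp.smul_apply, smul_eq_mul]
      rw [hcoord]
      push_cast
      have h1 := Complex.add_conj z
      push_cast at h1
      have h2 := Complex.sub_conj z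
      push_cast at h2
      have h4 := Complex.I_mul_I
      linear_combination (((u i : ℂ) * z) / 2) * h1
        - (((u i : ℂ) + Complex.I * (v i : ℂ)) / 2) * hzc
        - ((v i : ℂ) * z * Complex.I / 2) * h2
        - ((v i : ℂ) * z * (z.im : ℂ)) * h4
    have hωn : ‖ω‖ = 1 := by
      have hvu : ⟪v, u⟫ = 0 := by rw [real_inner_comm]; exact huv
      have h1 : ⟪ω, ω⟫ = z.re ^ 2 + z.im ^ 2 := by
        simp only [hω, inner_add_left, inner_add_right, real_inner_smul_left,
          real_inner_smul_right, huv, hvu, real_inner_self_eq_norm_sq, hu, hv]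
        rw [norm_smul, norm_smul]
        simp [hu, hv, Real.norm_eq_abs, mul_pow, sq_abs]
      have h2 : ‖ω‖ ^ 2 = 1 := by
        rw [← real_inner_self_eq_norm_sq, h1]
        have hn : Complex.normSq z = 1 := by
          rw [← Complex.sq_norm, hz, one_pow]
        rw [Complex.normSq_apply] at hn
        rw [pow_two, pow_two]
        exact hn
      calc ‖ω‖ = Real.sqrt (‖ω‖ ^ 2) := (Real.sqrt_sq (norm_nonneg ω)).symm
        _ = 1 := by rw [h2, Real.sqrt_one]
    have : G z = z ^ k * evalP p (toCn ω) := by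
      rw [hG]
      simp only []
      rw [hall]
      exact eval_smul_hom hp z _
    rw [this, norm_mul, norm_pow, hz, one_pow, one_mul]
    exact hb ω hωn
  -- max modulus
  set r : ℝ := Real.sqrt ((a - b) / (a + b)) with hr
  have hfrac0 : 0 ≤ (a - b) / (a + b) := div_nonneg (by linarith) (le_of_lt hab0)
  have hfrac1 : (a - b) / (a + b) ≤ 1 := by
    rw [div_le_one hab0]; linarith
  have hr2 : r ^ 2 = (a - b) / (a + b) := Real.sq_sqrt hfrac0
  have hr01 : 0 ≤ r := Real.sqrt_nonneg _
  have hr1 : r ≤ 1 := by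
    nlinarith [hr2]
  have hmax : ‖G (r : ℂ)‖ ≤ 1 := by
    have := Complex.norm_le_of_forall_mem_frontier_norm_le (U := Metric.ball (0:ℂ) 1)
      Metric.isBounded_ball (hdiff.diffContOnCl)
      (fun z hzf => by
        rw [frontier_ball (0:ℂ) one_ne_zero] at hzf
        have : ‖z‖ = 1 := by
          simpa using mem_sphere_zero_iff_norm.mp hzf
        simpa using hcirc z this)
      (z := (r : ℂ)) ?_
    · simpa using this
    · rw [closure_ball (0:ℂ) one_ne_zero]
      rw [Metric.mem_closedBall]
      simp only [dist_zero_right, Complex.norm_real, Real.norm_eq_abs]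
      rw [abs_of_nonneg hr01]
      exact hr1
  -- identify G r with the scaled ζ
  have hab0' : ((a + b : ℝ) : ℂ) ≠ 0 := by
    simp only [ne_eq, Complex.ofReal_eq_zero]
    exact ne_of_gt hab0
  have hGr : G (r : ℂ) = (1 / ((a + b : ℝ) : ℂ)) ^ k * evalP p ζ := by
    have hcoords : (fun i => (((r:ℂ) ^ 2 + 1) / 2) * (u i : ℂ)
        - Complex.I * (((r:ℂ) ^ 2 - 1) / 2) * (v i : ℂ))
        = fun i => (1 / ((a + b : ℝ) : ℂ)) * (ζ i) := by
      funext i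
      rw [hζ i]
      have hr2c : ((r : ℂ)) ^ 2 = (((a - b) / (a + b) : ℝ) : ℂ) := by
        rw [← Complex.ofReal_pow, hr2]
      rw [hr2c]
      push_cast
      have habne : (a : ℂ) + (b : ℂ) ≠ 0 := by
        have := hab0'
        push_cast at this ⊢
        exact this
      field_simp
      ring
    rw [hG]
    simp only []
    rw [hcoords]
    exact eval_smul_hom hp _ _
  have habs : ‖evalP p ζ‖ = (a + b) ^ k * ‖G (r : ℂ)‖ := by
    rw [hGr, norm_mul, norm_pow]
    have : ‖1 / ((a + b : ℝ) : ℂ)‖ = 1 / (a + b) := by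
      rw [norm_div, norm_one, Complex.norm_real, Real.norm_eq_abs, abs_of_pos hab0]
    rw [this]
    rw [← mul_assoc, ← mul_pow, mul_one_div_cancel (ne_of_gt hab0), one_pow, one_mul]
  rw [habs]
  calc (a + b) ^ k * ‖G (r : ℂ)‖ ≤ (a + b) ^ k * 1 := by
        apply mul_le_mul_of_nonneg_left hmax (by positivity)
    _ = (a + b) ^ k := mul_one _


lemma cross_dual_bound {n : ℕ} (u v : Rn n) (hu : ‖u‖ ≤ 1) (hv : ‖v‖ ≤ 1)
    (huv : ⟪u, v⟫ = 0) (d : ℂ) (hd : ‖d‖ = 1) (ω : Rn n) :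
    ‖∑ i, ((starRingEnd ℂ) d * ((u i : ℂ) - Complex.I * (v i : ℂ))) * (ω i : ℂ)‖
      ≤ ‖ω‖ := by
  set P : ℝ := ⟪u, ω⟫ with hP
  set Q : ℝ := ⟪v, ω⟫ with hQ
  have e0 : ∑ i, ((starRingEnd ℂ) d * ((u i : ℂ) - Complex.I * (v i : ℂ))) * (ω i : ℂ)
      = (starRingEnd ℂ) d * ((P : ℂ) - Complex.I * (Q : ℂ)) := by
    have hS1 : ((P : ℝ) : ℂ) = ∑ i, (u i : ℂ) * (ω i : ℂ) := by
      rw [hP, inner_sum']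
      push_cast
      rfl
    have hS2 : ((Q : ℝ) : ℂ) = ∑ i, (v i : ℂ) * (ω i : ℂ) := by
      rw [hQ, inner_sum']
      push_cast
      rfl
    rw [hS1, hS2]
    conv_rhs => rw [show ((∑ i, (u i : ℂ) * (ω i : ℂ)) - Complex.I * ∑ i, (v i : ℂ) * (ω i : ℂ))
      = ∑ i, ((u i : ℂ) * (ω i : ℂ) - Complex.I * ((v i : ℂ) * (ω i : ℂ))) from by
        rw [Finset.mul_sum, ← Finset.sum_sub_distrib]]
    rw [Finset.mul_sum]
    exact Finset.sum_congr rfl fun i _ => by ring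
  rw [e0, norm_mul]
  have hdc : ‖(starRingEnd ℂ) d‖ = 1 := by
    rw [Complex.norm_conj, hd]
  rw [hdc, one_mul]
  have e1 : (P : ℂ) - Complex.I * (Q : ℂ) = ((P : ℝ) : ℂ) + ((-Q : ℝ) : ℂ) * Complex.I := by
    push_cast
    ring
  rw [e1, Complex.norm_add_mul_I]
  have e2 : P ^ 2 + (-Q) ^ 2 ≤ ‖ω‖ ^ 2 := by
    rw [neg_pow]
    simpa using bessel2 u v ω hu hv huv
  calc Real.sqrt (P ^ 2 + (-Q) ^ 2) ≤ Real.sqrt (‖ω‖ ^ 2) := Real.sqrt_le_sqrt e2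
    _ = ‖ω‖ := Real.sqrt_sq (norm_nonneg ω)


lemma rpow_inv_k_le {x y : ℝ} {k : ℕ} (hk : 1 ≤ k) (hx : 0 ≤ x) (hy : 0 ≤ y)
    (h : x ≤ y ^ k) : x ^ (1 / (k : ℝ)) ≤ y := by
  have hk0 : (k : ℝ) ≠ 0 := Nat.cast_ne_zero.mpr (by omega)
  calc x ^ (1 / (k : ℝ)) ≤ (y ^ k) ^ (1 / (k : ℝ)) :=
        Real.rpow_le_rpow hx h (by positivity)
    _ = y := by
        rw [← Real.rpow_natCast y k, ← Real.rpow_mul hy, mul_one_div, div_self hk0,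
          Real.rpow_one]


lemma le_one_of_rpow_le_one {x : ℝ} {k : ℕ} (hk : 1 ≤ k) (hx : 0 ≤ x)
    (h : x ^ (1 / (k : ℝ)) ≤ 1) : x ≤ 1 := by
  have hk0 : (k : ℝ) ≠ 0 := Nat.cast_ne_zero.mpr (by omega)
  have h2 : (x ^ (1 / (k : ℝ))) ^ (k : ℕ) ≤ 1 ^ (k : ℕ) :=
    pow_le_pow_left₀ (Real.rpow_nonneg hx _) h k
  rw [one_pow, ← Real.rpow_natCast (x ^ (1 / (k : ℝ))) k, ← Real.rpow_mul hx,
    one_div_mul_cancel hk0, Real.rpow_one] at h2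
  exact h2


/-- Theorem 2.6, first part: for the euclidean unit sphere `E = S^{n-1}`,
Siciak's homogeneous extremal function equals the cross norm of the euclidean norm. -/
theorem siciak_of_euclidean_sphere {n : ℕ} :
    ∀ ζ : Cn n,
      siciak (toCn '' {x : Rn n | ‖x‖ = 1}) (fun _ => 1) ζ =
        ENNReal.ofReal (crossNorm (fun x => ‖x‖) ζ) := by
  intro ζ
  obtain ⟨d, ξ, η, hd, hcoord, hξη, hba⟩ := exists_normal ζ
  have hde : d * (starRingEnd ℂ) d = 1 := by
    rw [Complex.mul_conj, Complex.normSq_eq_norm_sq, hd]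
    norm_num
  set a : ℝ := ‖ξ‖ with haa
  set b : ℝ := ‖η‖ with hbb
  have ha0 : 0 ≤ a := norm_nonneg ξ
  have hb0 : 0 ≤ b := norm_nonneg η
  have hab0 : 0 ≤ a + b := by linarith
  set u : Rn n := a⁻¹ • ξ with hu
  set v : Rn n := b⁻¹ • η with hv
  have hξu : ∀ i, ξ i = a * u i := by
    intro i
    by_cases h : a = 0
    · have : ξ = 0 := norm_eq_zero.mp h
      rw [hu, this, h]
      simp
    · rw [hu]
      simp only [PiLp.smul_apply, smul_eq_mul]
      field_simp
  have hηv : ∀ i, η i = b * v i := by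
    intro i
    by_cases h : b = 0
    · have : η = 0 := norm_eq_zero.mp h
      rw [hv, this, h]
      simp
    · rw [hv]
      simp only [PiLp.smul_apply, smul_eq_mul]
      field_simp
  have hu1 : a ≠ 0 → ‖u‖ = 1 := by
    intro h
    rw [hu, norm_smul, Real.norm_eq_abs, abs_inv, abs_of_nonneg ha0, ← haa]
    field_simp
  have hv1 : b ≠ 0 → ‖v‖ = 1 := by
    intro h
    rw [hv, norm_smul, Real.norm_eq_abs, abs_inv, abs_of_nonneg hb0, ← hbb]
    field_simp
  have hule : ‖u‖ ≤ 1 := by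
    by_cases h : a = 0
    · rw [hu, h]
      simp
    · rw [hu1 h]
  have hvle : ‖v‖ ≤ 1 := by
    by_cases h : b = 0
    · rw [hv, h]
      simp
    · rw [hv1 h]
  have huv : ⟪u, v⟫ = 0 := by
    rw [hu, hv, real_inner_smul_left, real_inner_smul_right, hξη]
    ring
  set c : Fin n → ℂ := fun i => (starRingEnd ℂ) d * ((u i : ℂ) - Complex.I * (v i : ℂ)) with hc
  -- value of the dual functional at ζ
  have hcval : ∑ i, c i * ζ i = ((a + b : ℝ) : ℂ) := by
    have hterm : ∀ i : Fin n, c i * ζ i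
        = (a : ℂ) * (u i : ℂ) ^ 2 + (b : ℂ) * (v i : ℂ) ^ 2
          + ((b : ℂ) - (a : ℂ)) * Complex.I * ((u i : ℂ) * (v i : ℂ)) := by
      intro i
      rw [hc]
      simp only []
      rw [hcoord i, hξu i, hηv i]
      push_cast
      linear_combination (((u i : ℂ) - Complex.I * (v i : ℂ))
          * ((a : ℂ) * (u i : ℂ) + (b : ℂ) * (v i : ℂ) * Complex.I)) * hde
        - ((b : ℂ) * (v i : ℂ) ^ 2) * Complex.I_mul_I
    have hsq_u : ∑ i, ((u i : ℂ)) ^ 2 = ((‖u‖ ^ 2 : ℝ) : ℂ) := by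
      rw [normsq_sum']
      push_cast
      rfl
    have hsq_v : ∑ i, ((v i : ℂ)) ^ 2 = ((‖v‖ ^ 2 : ℝ) : ℂ) := by
      rw [normsq_sum']
      push_cast
      rfl
    have hsum_uv : ∑ i, (u i : ℂ) * (v i : ℂ) = 0 := by
      have : ((⟪u, v⟫ : ℝ) : ℂ) = ∑ i, (u i : ℂ) * (v i : ℂ) := by
        rw [inner_sum']
        push_cast
        rfl
      rw [← this, huv]
      norm_num
    have ha_norm : (a : ℂ) * ((‖u‖ ^ 2 : ℝ) : ℂ) = (a : ℂ) := by
      by_cases h : a = 0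
      · rw [h]; simp
      · rw [hu1 h]; norm_num
    have hb_norm : (b : ℂ) * ((‖v‖ ^ 2 : ℝ) : ℂ) = (b : ℂ) := by
      by_cases h : b = 0
      · rw [h]; simp
      · rw [hv1 h]; norm_num
    calc ∑ i, c i * ζ i
        = ∑ i, ((a : ℂ) * (u i : ℂ) ^ 2 + (b : ℂ) * (v i : ℂ) ^ 2
            + ((b : ℂ) - (a : ℂ)) * Complex.I * ((u i : ℂ) * (v i : ℂ))) :=
          Finset.sum_congr rfl fun i _ => hterm i
      _ = (a : ℂ) * (∑ i, ((u i : ℂ)) ^ 2) + (b : ℂ) * (∑ i, ((v i : ℂ)) ^ 2)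
            + ((b : ℂ) - (a : ℂ)) * Complex.I * (∑ i, (u i : ℂ) * (v i : ℂ)) := by
          rw [Finset.sum_add_distrib, Finset.sum_add_distrib, ← Finset.mul_sum,
            ← Finset.mul_sum, ← Finset.mul_sum]
      _ = ((a + b : ℝ) : ℂ) := by
          rw [hsq_u, hsq_v, hsum_uv, ha_norm, hb_norm]
          push_cast
          ring
  have hcabs : ‖∑ i, c i * ζ i‖ = a + b := by
    rw [hcval, Complex.norm_real, Real.norm_eq_abs, abs_of_nonneg hab0]
  -- the decomposition set
  set S : Set ℝ := { s : ℝ | ∃ (N : ℕ) (α : Fin N → ℂ) (ω : Fin N → Rn n),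
    ζ = ∑ j, α j • toCn (ω j) ∧ s = ∑ j, ‖α j‖ * ‖ω j‖ } with hS
  have hmem : (a + b) ∈ S := by
    refine ⟨2, ![d, d * Complex.I], ![ξ, η], ?_, ?_⟩
    · rw [Fin.sum_univ_two]
      ext i
      simp only [Matrix.cons_val_zero, Matrix.cons_val_one, Matrix.head_cons,
        PiLp.add_apply, PiLp.smul_apply, smul_eq_mul]
      rw [hcoord i]
      show d * _ = d * (ξ i : ℂ) + d * Complex.I * (η i : ℂ)
      ring
    · rw [Fin.sum_univ_two]
      simp only [Matrix.cons_val_zero, Matrix.cons_val_one, Matrix.head_cons]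
      rw [norm_mul, Complex.norm_I, hd]
      ring
  have hlow : ∀ s ∈ S, a + b ≤ s := by
    rintro s ⟨N, α, ω, hdec, rfl⟩
    have happ : ∀ i, ζ i = ∑ j, α j * ((ω j i : ℝ) : ℂ) := by
      intro i
      rw [hdec]
      rw [show ((∑ j, α j • toCn (ω j)) i) = ∑ j, (α j • toCn (ω j)) i from
        by rw [WithLp.ofLp_sum]; exact Finset.sum_apply i Finset.univ _]
      exact Finset.sum_congr rfl fun j _ => rfl
    have hswap : ∑ i, c i * ζ i = ∑ j, α j * (∑ i, c i * ((ω j i : ℝ) : ℂ)) := by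
      calc ∑ i, c i * ζ i = ∑ i, ∑ j, c i * (α j * ((ω j i : ℝ) : ℂ)) := by
            refine Finset.sum_congr rfl fun i _ => ?_
            rw [happ i, Finset.mul_sum]
        _ = ∑ j, ∑ i, c i * (α j * ((ω j i : ℝ) : ℂ)) := Finset.sum_comm
        _ = ∑ j, α j * (∑ i, c i * ((ω j i : ℝ) : ℂ)) := by
            refine Finset.sum_congr rfl fun j _ => ?_
            rw [Finset.mul_sum]
            exact Finset.sum_congr rfl fun i _ => by ring
    calc a + b = ‖∑ i, c i * ζ i‖ := hcabs.symm
      _ = ‖∑ j, α j * (∑ i, c i * ((ω j i : ℝ) : ℂ))‖ := by rw [hswap]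
      _ ≤ ∑ j, ‖α j * (∑ i, c i * ((ω j i : ℝ) : ℂ))‖ :=
          norm_sum_le _ _
      _ ≤ ∑ j, ‖α j‖ * ‖ω j‖ := by
          refine Finset.sum_le_sum fun j _ => ?_
          rw [norm_mul]
          exact mul_le_mul_of_nonneg_left
            (cross_dual_bound u v hule hvle huv d hd (ω j)) (norm_nonneg _)
  have hbdd : BddBelow S := by
    refine ⟨0, fun s hs => ?_⟩
    obtain ⟨N, α, ω, -, rfl⟩ := hs
    exact Finset.sum_nonneg fun j _ => mul_nonneg (norm_nonneg _) (norm_nonneg _)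
  have hcross : crossNorm (fun x => ‖x‖) ζ = a + b := by
    rw [crossNorm]
    exact le_antisymm (csInf_le hbdd hmem) (le_csInf ⟨_, hmem⟩ hlow)
  rw [hcross]
  -- the two inequalities for siciak
  apply le_antisymm
  · rw [siciak]
    refine iSup_le fun p => iSup_le fun k => iSup_le fun hhom => iSup_le fun hk =>
      iSup_le fun hb => ?_
    apply ENNReal.ofReal_le_ofReal
    have hbound' : ∀ ω : Rn n, ‖ω‖ = 1 → ‖evalP p (toCn ω)‖ ≤ 1 := by
      intro ω hω
      exact le_one_of_rpow_le_one hk (norm_nonneg _) (hb (toCn ω) ⟨ω, hω, rfl⟩)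
    have hkey : ‖evalP p ζ‖ ≤ (a + b) ^ k := by
      set ζ₀ : Cn n := (starRingEnd ℂ) d • ζ with hζ₀
      have hζ0c : ∀ i, ζ₀ i = (ξ i : ℂ) + (η i : ℂ) * Complex.I := by
        intro i
        rw [hζ₀]
        simp only [PiLp.smul_apply, smul_eq_mul]
        rw [hcoord i, ← mul_assoc, mul_comm ((starRingEnd ℂ) d) d, hde, one_mul]
      have habs0 : ‖evalP p ζ‖ = ‖evalP p ζ₀‖ := by
        have hζd : (fun i => ζ i) = fun i => d * ζ₀ i := by
          funext i
          rw [hζ₀]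
          simp only [PiLp.smul_apply, smul_eq_mul]
          rw [← mul_assoc, hde, one_mul]
        rw [evalP, evalP, hζd, eval_smul_hom hhom, norm_mul, norm_pow, hd, one_pow, one_mul]
      rw [habs0]
      by_cases hbz : b = 0
      · -- real case
        by_cases haz : a = 0
        · have hζ00 : (fun i => ζ₀ i) = fun i => (0 : ℂ) * (0 : ℂ) := by
            funext i
            rw [hζ0c i, hξu i, hηv i, haz, hbz]
            push_cast
            ring
          have : evalP p ζ₀ = 0 := by
            rw [evalP, hζ00, eval_smul_hom hhom, zero_pow (by omega), zero_mul]
          rw [this, norm_zero]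
          positivity
        · have hζ0u : (fun i => ζ₀ i) = fun i => (a : ℂ) * ((u i : ℝ) : ℂ) := by
            funext i
            rw [hζ0c i, hξu i, hηv i, hbz]
            push_cast
            ring
          have : evalP p ζ₀ = (a : ℂ) ^ k * evalP p (toCn u) := by
            rw [evalP, hζ0u, eval_smul_hom hhom]
            rfl
          rw [this, norm_mul, norm_pow, Complex.norm_real, Real.norm_eq_abs, abs_of_nonneg ha0, hbz, add_zero]
          calc a ^ k * ‖evalP p (toCn u)‖ ≤ a ^ k * 1 :=
                mul_le_mul_of_nonneg_left (hbound' u (hu1 haz)) (by positivity)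
            _ = a ^ k := mul_one _
      · have hbpos : 0 < b := lt_of_le_of_ne hb0 (Ne.symm hbz)
        have hapos : a ≠ 0 := ne_of_gt (lt_of_lt_of_le hbpos hba)
        refine key_bound hhom hbound' u v (hu1 hapos) (hv1 hbz) huv hbpos hba ζ₀ ?_
        intro i
        rw [hζ0c i, hξu i, hηv i]
        push_cast
        ring
    exact rpow_inv_k_le hk (norm_nonneg _) hab0 hkey
  · -- lower bound via the linear polynomial
    set P : MvPolynomial (Fin n) ℂ := ∑ i, MvPolynomial.C (c i) * MvPolynomial.X i with hP
    have hPhom : P.IsHomogeneous 1 := by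
      rw [hP]
      exact MvPolynomial.IsHomogeneous.sum _ _ _
        (fun i _ => MvPolynomial.isHomogeneous_C_mul_X (c i) i)
    have hPeval : ∀ w : Cn n, evalP P w = ∑ i, c i * w i := by
      intro w
      rw [evalP, hP]
      rw [map_sum]
      refine Finset.sum_congr rfl fun i _ => ?_
      rw [MvPolynomial.eval_mul, MvPolynomial.eval_C, MvPolynomial.eval_X]
    rw [siciak]
    refine le_iSup_of_le P (le_iSup_of_le 1 (le_iSup_of_le hPhom (le_iSup_of_le le_rfl
      (le_iSup_of_le ?_ ?_))))
    · rintro w ⟨ω, hω, rfl⟩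
      rw [hPeval]
      simp only [Nat.cast_one, ne_eq, one_ne_zero, not_false_eq_true, div_self,
        Real.rpow_one]
      have : ∑ i, c i * (toCn ω) i = ∑ i, c i * ((ω i : ℝ) : ℂ) := rfl
      rw [this]
      calc ‖∑ i, c i * ((ω i : ℝ) : ℂ)‖ ≤ ‖ω‖ :=
            cross_dual_bound u v hule hvle huv d hd ω
        _ = 1 := hω
    · apply le_of_eq
      congr 1
      rw [hPeval ζ, hcabs]
      simp

end
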